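/- For 0 < p < 1/2 and 0 ≤ e ≤ H(p), D(x) = H(x*p) - (1-e)·H(x) - H(p) satisfies D(x) ≤ 0 for all x ∈ [0,1], i.e., the BEC(e) receiver is more capable than the BSC(p) receiver. -/

import Mathlib

open Real Set

/-- Binary entropy function (base 2). -/
noncomputable def binH (t : ℝ) : ℝ := -(t * Real.logb 2 t) - (1 - t) * Real.logb 2 (1 - t)

/-- Binary convolution x*p = x(1-p)+p(1-x). -/
def bconv (x p : ℝ) : ℝ := x * (1 - p) + p * (1 - x)

/-- D(x) = H(x*p) - (1-e) H(x) - H(p). -/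
noncomputable def Dfun (p e x : ℝ) : ℝ := binH (bconv x p) - (1 - e) * binH x - binH p

lemma binH_eq (t : ℝ) : binH t = Real.binEntropy t / Real.log 2 := by
  unfold binH Real.binEntropy Real.logb
  rw [Real.log_inv, Real.log_inv]
  field_simp
  ring

namespace BECBSC

noncomputable def lam (p : ℝ) : ℝ := 1 - Real.binEntropy p / Real.log 2

noncomputable def F (p x : ℝ) : ℝ :=
  Real.binEntropy (bconv x p) - lam p * Real.binEntropy x - Real.binEntropy p

noncomputable def F' (p x : ℝ) : ℝ :=
  (1 - 2*p) * (Real.log (1 - bconv x p) - Real.log (bconv x p))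
    - lam p * (Real.log (1-x) - Real.log x)

noncomputable def F'' (p x : ℝ) : ℝ :=
  lam p * (1/x + 1/(1-x)) - (1-2*p)^2 * (1/(bconv x p) + 1/(1 - bconv x p))

lemma bconv_mem {p x : ℝ} (hp0 : 0 < p) (hp1 : p < 1) (hx0 : 0 ≤ x) (hx1 : x ≤ 1) :
    0 < bconv x p ∧ bconv x p < 1 := by
  unfold bconv
  constructor
  · rcases le_total x (1/2) with h | h
    · nlinarith [mul_nonneg hx0 (by linarith : (0:ℝ) ≤ 1 - p),
        mul_nonneg hp0.le (by linarith : (0:ℝ) ≤ 1/2 - x)]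
    · nlinarith [mul_nonneg hp0.le (by linarith : (0:ℝ) ≤ 1 - x),
        mul_nonneg (by linarith : (0:ℝ) ≤ 1 - p) (by linarith : (0:ℝ) ≤ x - 1/2)]
  · rcases le_total x (1/2) with h | h
    · nlinarith [mul_nonneg hp0.le (by linarith : (0:ℝ) ≤ 1 - x),
        mul_nonneg (by linarith : (0:ℝ) ≤ 1 - p) (by linarith : (0:ℝ) ≤ 1/2 - x)]
    · nlinarith [mul_nonneg hx0 (by linarith : (0:ℝ) ≤ 1 - p),
        mul_nonneg hp0.le (by linarith : (0:ℝ) ≤ x - 1/2)]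

lemma hasDerivAt_bconv (p x : ℝ) : HasDerivAt (fun x => bconv x p) (1 - 2*p) x := by
  have h : HasDerivAt (fun x : ℝ => x * (1-p) + p * (1-x)) (1*(1-p) + p*(0-1)) x :=
    ((hasDerivAt_id x).mul_const (1-p)).add
      (((hasDerivAt_const x (1:ℝ)).sub (hasDerivAt_id x)).const_mul p)
  convert h using 1
  · rfl
  · ring

lemma hasDerivAt_F {p x : ℝ} (hp0 : 0 < p) (hp1 : p < 1) (hx0 : 0 < x) (hx1 : x < 1) :
    HasDerivAt (F p) (F' p x) x := by
  obtain ⟨hy0, hy1⟩ := bconv_mem hp0 hp1 hx0.le hx1.le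
  have hb := hasDerivAt_bconv p x
  have h1 : HasDerivAt (fun x => Real.binEntropy (bconv x p))
      ((Real.log (1 - bconv x p) - Real.log (bconv x p)) * (1 - 2*p)) x :=
    by have := (Real.hasDerivAt_binEntropy hy0.ne' hy1.ne).comp x hb; exact this
  have h2 := Real.hasDerivAt_binEntropy hx0.ne' hx1.ne
  have := (h1.sub (h2.const_mul (lam p))).sub_const (Real.binEntropy p)
  refine this.congr_deriv ?_
  unfold F'
  ring

lemma hasDerivAt_F' {p x : ℝ} (hp0 : 0 < p) (hp1 : p < 1) (hx0 : 0 < x) (hx1 : x < 1) :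
    HasDerivAt (F' p) (F'' p x) x := by
  obtain ⟨hy0, hy1⟩ := bconv_mem hp0 hp1 hx0.le hx1.le
  have hb := hasDerivAt_bconv p x
  have hb' : HasDerivAt (fun x => 1 - bconv x p) (-(1 - 2*p)) x := by
    simpa using (hb.const_sub 1)
  have hA : HasDerivAt (fun x => Real.log (1 - bconv x p)) ((1 - bconv x p)⁻¹ * (-(1 - 2*p))) x :=
    (Real.hasDerivAt_log (by linarith)).comp x hb'
  have hB : HasDerivAt (fun x => Real.log (bconv x p)) ((bconv x p)⁻¹ * (1 - 2*p)) x :=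
    by have := (Real.hasDerivAt_log hy0.ne').comp x hb; exact this
  have hc : HasDerivAt (fun x : ℝ => 1 - x) (-1) x := by
    simpa using (hasDerivAt_id x).const_sub 1
  have hC : HasDerivAt (fun x : ℝ => Real.log (1-x)) ((1-x)⁻¹ * (-1)) x :=
    (Real.hasDerivAt_log (by linarith)).comp x hc
  have hD := Real.hasDerivAt_log hx0.ne'
  have := ((hA.sub hB).const_mul (1-2*p)).sub ((hC.sub hD).const_mul (lam p))
  refine this.congr_deriv ?_
  unfold F''
  field_simp
  ring


lemma lam_pos {p : ℝ} (hp0 : 0 < p) (hp1 : p < 1/2) : 0 < lam p := by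
  have h2 : (0:ℝ) < Real.log 2 := Real.log_pos (by norm_num)
  have h := Real.binEntropy_lt_log_two.mpr (show p ≠ 2⁻¹ by intro h; rw [h] at hp1; norm_num at hp1)
  unfold lam
  have : Real.binEntropy p / Real.log 2 < 1 := (div_lt_one h2).mpr h
  linarith

lemma lam_lt_one {p : ℝ} (hp0 : 0 < p) (hp1 : p < 1/2) : lam p < 1 := by
  have h2 : (0:ℝ) < Real.log 2 := Real.log_pos (by norm_num)
  have h := Real.binEntropy_pos hp0 (by linarith)
  unfold lam
  have : 0 < Real.binEntropy p / Real.log 2 := div_pos h h2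
  linarith

/-- The numerator threshold constant. -/
noncomputable def cnum (p : ℝ) : ℝ := (1 - lam p) * (1-2*p)^2 - 4 * lam p * (p*(1-p))

/-- The denominator constant. -/
noncomputable def dc (p : ℝ) : ℝ := (1 - lam p) * (1-2*p)^2

lemma dc_pos {p : ℝ} (hp0 : 0 < p) (hp1 : p < 1/2) : 0 < dc p := by
  have := lam_lt_one hp0 hp1
  have ht : (0:ℝ) < 1 - 2*p := by linarith
  unfold dc
  have : (0:ℝ) < 1 - lam p := by linarith
  exact mul_pos this (by positivity)

lemma cnum_lt_dc {p : ℝ} (hp0 : 0 < p) (hp1 : p < 1/2) : cnum p < dc p := by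
  have h1 := lam_pos hp0 hp1
  have h2 : (0:ℝ) < p * (1-p) := by nlinarith
  unfold cnum dc
  nlinarith

lemma F''_eq {p x : ℝ} (hp0 : 0 < p) (hp1 : p < 1) (hx0 : 0 < x) (hx1 : x < 1) :
    F'' p x = (dc p * (1-2*x)^2 - cnum p) / 4
      / ((x*(1-x)) * (bconv x p * (1 - bconv x p))) := by
  obtain ⟨hy0, hy1⟩ := bconv_mem hp0 hp1 hx0.le hx1.le
  have hX : x * (1-x) ≠ 0 := (mul_pos hx0 (by linarith)).ne'
  have hY : bconv x p * (1 - bconv x p) ≠ 0 := (mul_pos hy0 (by linarith)).ne'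
  unfold F'' dc cnum
  rw [div_div]
  rw [eq_div_iff (mul_ne_zero (by norm_num : (4:ℝ) ≠ 0) (mul_ne_zero hX hY))]
  have hx0' : x ≠ 0 := hx0.ne'
  have hx1' : (1:ℝ) - x ≠ 0 := by linarith
  have hy0' : bconv x p ≠ 0 := hy0.ne'
  have hy1' : (1:ℝ) - bconv x p ≠ 0 := by linarith
  field_simp
  unfold bconv
  ring

lemma F''_nonneg {p x : ℝ} (hp0 : 0 < p) (hp1 : p < 1) (hx0 : 0 < x) (hx1 : x < 1)
    (h : cnum p ≤ dc p * (1-2*x)^2) : 0 ≤ F'' p x := by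
  obtain ⟨hy0, hy1⟩ := bconv_mem hp0 hp1 hx0.le hx1.le
  rw [F''_eq hp0 hp1 hx0 hx1]
  apply div_nonneg (by linarith)
  exact (mul_pos (mul_pos hx0 (by linarith)) (mul_pos hy0 (by linarith))).le

lemma F''_nonpos {p x : ℝ} (hp0 : 0 < p) (hp1 : p < 1) (hx0 : 0 < x) (hx1 : x < 1)
    (h : dc p * (1-2*x)^2 ≤ cnum p) : F'' p x ≤ 0 := by
  obtain ⟨hy0, hy1⟩ := bconv_mem hp0 hp1 hx0.le hx1.le
  rw [F''_eq hp0 hp1 hx0 hx1]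
  apply div_nonpos_of_nonpos_of_nonneg (by linarith)
  exact (mul_pos (mul_pos hx0 (by linarith)) (mul_pos hy0 (by linarith))).le


lemma contF (p : ℝ) : Continuous (F p) := by
  unfold F bconv
  fun_prop

lemma convexOn_F {p a b : ℝ} (hp0 : 0 < p) (hp1 : p < 1) (h0 : 0 ≤ a) (h1 : b ≤ 1)
    (hsign : ∀ x ∈ Ioo a b, cnum p ≤ dc p * (1-2*x)^2) : ConvexOn ℝ (Icc a b) (F p) := by
  apply convexOn_of_hasDerivWithinAt2_nonneg (convex_Icc a b) ((contF p).continuousOn)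
      (f' := F' p) (f'' := F'' p)
  · intro x hx
    rw [interior_Icc] at hx
    exact (hasDerivAt_F hp0 hp1 (lt_of_le_of_lt h0 hx.1) (lt_of_lt_of_le hx.2 h1)).hasDerivWithinAt
  · intro x hx
    rw [interior_Icc] at hx
    exact (hasDerivAt_F' hp0 hp1 (lt_of_le_of_lt h0 hx.1) (lt_of_lt_of_le hx.2 h1)).hasDerivWithinAt
  · intro x hx
    rw [interior_Icc] at hx
    exact F''_nonneg hp0 hp1 (lt_of_le_of_lt h0 hx.1) (lt_of_lt_of_le hx.2 h1) (hsign x hx)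

lemma concaveOn_F {p a b : ℝ} (hp0 : 0 < p) (hp1 : p < 1) (h0 : 0 ≤ a) (h1 : b ≤ 1)
    (hsign : ∀ x ∈ Ioo a b, dc p * (1-2*x)^2 ≤ cnum p) : ConcaveOn ℝ (Icc a b) (F p) := by
  apply concaveOn_of_hasDerivWithinAt2_nonpos (convex_Icc a b) ((contF p).continuousOn)
      (f' := F' p) (f'' := F'' p)
  · intro x hx
    rw [interior_Icc] at hx
    exact (hasDerivAt_F hp0 hp1 (lt_of_le_of_lt h0 hx.1) (lt_of_lt_of_le hx.2 h1)).hasDerivWithinAt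
  · intro x hx
    rw [interior_Icc] at hx
    exact (hasDerivAt_F' hp0 hp1 (lt_of_le_of_lt h0 hx.1) (lt_of_lt_of_le hx.2 h1)).hasDerivWithinAt
  · intro x hx
    rw [interior_Icc] at hx
    exact F''_nonpos hp0 hp1 (lt_of_le_of_lt h0 hx.1) (lt_of_lt_of_le hx.2 h1) (hsign x hx)

lemma F_zero {p : ℝ} : F p 0 = 0 := by
  have h : bconv 0 p = p := by unfold bconv; ring
  simp [F, h]

lemma F_one {p : ℝ} : F p 1 = 0 := by
  have h : bconv 1 p = 1 - p := by unfold bconv; ring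
  simp [F, h]

lemma F_half {p : ℝ} : F p (1/2) = 0 := by
  have h : bconv (1/2) p = 2⁻¹ := by unfold bconv; ring
  have h2 : Real.log 2 ≠ 0 := (Real.log_pos (by norm_num)).ne'
  rw [F, h, lam, show (1/2 : ℝ) = 2⁻¹ by norm_num, Real.binEntropy_two_inv]
  field_simp
  ring

lemma F_symm {p x : ℝ} : F p (1-x) = F p x := by
  have h : bconv (1-x) p = 1 - bconv x p := by unfold bconv; ring
  rw [F, F, h, Real.binEntropy_one_sub, Real.binEntropy_one_sub]

lemma F_nonpos {p : ℝ} (hp0 : 0 < p) (hp1 : p < 1/2) : ∀ x ∈ Icc (0:ℝ) 1, F p x ≤ 0 := by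
  have hp1' : p < 1 := by linarith
  have hd := dc_pos hp0 hp1
  by_cases hc : cnum p ≤ 0
  · have hcv : ConvexOn ℝ (Icc (0:ℝ) 1) (F p) :=
      convexOn_F hp0 hp1' le_rfl le_rfl
        (fun x _ => le_trans hc (by positivity))
    intro x hx
    have h := hcv.le_on_segment (left_mem_Icc.mpr (by norm_num)) (right_mem_Icc.mpr (by norm_num))
      (by rwa [segment_eq_Icc (by norm_num : (0:ℝ) ≤ 1)])
    simpa [F_zero, F_one] using h
  · push_neg at hc
    set s := Real.sqrt (cnum p / dc p) with hs
    have hratio0 : 0 < cnum p / dc p := div_pos hc hd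
    have hratio1 : cnum p / dc p < 1 := (div_lt_one hd).mpr (cnum_lt_dc hp0 hp1)
    have hs0 : 0 < s := Real.sqrt_pos.mpr hratio0
    have hs1 : s < 1 := by
      rw [hs, show (1:ℝ) = Real.sqrt 1 by simp]
      exact Real.sqrt_lt_sqrt hratio0.le hratio1
    have hssq : dc p * s^2 = cnum p := by
      rw [hs, Real.sq_sqrt hratio0.le]
      field_simp
    set x₀ := (1 - s)/2 with hx₀
    have hx₀0 : 0 < x₀ := by rw [hx₀]; linarith
    have hx₀h : x₀ < 1/2 := by rw [hx₀]; linarith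
    have hconc : ConcaveOn ℝ (Icc x₀ (1-x₀)) (F p) := by
      apply concaveOn_F hp0 hp1' hx₀0.le (by linarith)
      intro x hx
      have h1 : 1 - 2*x < s := by rw [hx₀] at hx; linarith [hx.1]
      have h2 : -s < 1 - 2*x := by rw [hx₀] at hx; linarith [hx.2]
      nlinarith [mul_nonneg hd.le (mul_nonneg (by linarith : (0:ℝ) ≤ s - (1-2*x))
        (by linarith : (0:ℝ) ≤ s + (1-2*x)))]
    have hmid : ∀ x ∈ Icc x₀ (1-x₀), F p x ≤ 0 := by
      intro x hx
      have hx' : 1 - x ∈ Icc x₀ (1-x₀) := ⟨by linarith [hx.2], by linarith [hx.1]⟩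
      have h := hconc.2 hx hx' (by norm_num : (0:ℝ) ≤ 1/2) (by norm_num : (0:ℝ) ≤ 1/2)
        (by norm_num)
      have e1 : (1/2:ℝ) • x + (1/2:ℝ) • (1-x) = 1/2 := by
        simp only [smul_eq_mul]; ring
      rw [e1, F_half, F_symm] at h
      simp only [smul_eq_mul] at h
      linarith
    have hcvl : ConvexOn ℝ (Icc 0 x₀) (F p) := by
      apply convexOn_F hp0 hp1' le_rfl (by linarith)
      intro x hx
      have h1 : s ≤ 1 - 2*x := by rw [hx₀] at hx; linarith [hx.2]
      nlinarith [mul_nonneg hd.le (mul_nonneg (by linarith : (0:ℝ) ≤ 1 - 2*x - s)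
        (by linarith : (0:ℝ) ≤ 1 - 2*x + s))]
    have hleft : ∀ x ∈ Icc (0:ℝ) x₀, F p x ≤ 0 := by
      intro x hx
      have h := hcvl.le_on_segment (left_mem_Icc.mpr hx₀0.le) (right_mem_Icc.mpr hx₀0.le)
        (by rwa [segment_eq_Icc hx₀0.le])
      have hFx₀ : F p x₀ ≤ 0 := hmid x₀ ⟨le_rfl, by linarith⟩
      rw [F_zero] at h
      exact le_trans h (max_le le_rfl hFx₀)
    intro x hx
    rcases le_total x x₀ with h | h
    · exact hleft x ⟨hx.1, h⟩
    · rcases le_total x (1-x₀) with h2 | h2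
      · exact hmid x ⟨h, h2⟩
      · rw [← F_symm]
        exact hleft (1-x) ⟨by linarith [hx.2], by linarith⟩

end BECBSC

/-- When e ≤ H(p), D(x) ≤ 0 for all x ∈ [0,1], i.e. BEC(e) is more capable than BSC(p). -/
theorem stmt5 (p e : ℝ) (hp0 : 0 < p) (hp1 : p < 1 / 2) (he0 : 0 ≤ e) (he1 : e ≤ binH p) :
    ∀ x ∈ Set.Icc (0 : ℝ) 1, Dfun p e x ≤ 0 := by
  intro x hx
  have hlog : (0:ℝ) < Real.log 2 := Real.log_pos (by norm_num)
  have hF := BECBSC.F_nonpos hp0 hp1 x hx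
  have hBx : 0 ≤ binH x := by
    rw [binH_eq]
    exact div_nonneg (Real.binEntropy_nonneg hx.1 hx.2) hlog.le
  have hiden : Dfun p e x = BECBSC.F p x / Real.log 2 + (e - binH p) * binH x := by
    unfold Dfun BECBSC.F BECBSC.lam
    simp only [binH_eq]
    field_simp
    ring
  rw [hiden]
  have h1 : BECBSC.F p x / Real.log 2 ≤ 0 := div_nonpos_of_nonpos_of_nonneg hF hlog.le
  nlinarith [mul_nonneg (sub_nonneg.mpr he1) hBx]
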